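/- Define, for real p with p² > 4, x(p) = (p² − 2 + √(p²(p²−4)))/(2√(p²(p²−4))) and y(p) = (p² + √(p²(p²−4)))/(2p²). Then y(p)² − 2x(p)·y(p) + x(p) = 0 for all such p; i.e., the pair (x(p), y(p)) parametrizes the algebraic curve y² − 2xy + x = 0. Moreover, with y₀(p) = (1/2)(1 + p²/√(p²(p²−4))), one has y₀² − 2xy₀ + x = 0 and y = y₀/(2y₀ − 1). -/

import Mathlib

/-- for `p² > 4`, with
`x(p) = (p²−2+√(p²(p²−4)))/(2√(p²(p²−4)))`, `y(p) = (p²+√(p²(p²−4)))/(2p²)` and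
`y₀(p) = (1/2)(1 + p²/√(p²(p²−4)))`, one has `y² − 2xy + x = 0`,
`y₀² − 2xy₀ + x = 0`, and `y = y₀/(2y₀ − 1)`. -/
theorem stmt19 (p : ℝ) (hp : p ^ 2 > 4) :
    ((p ^ 2 + Real.sqrt (p ^ 2 * (p ^ 2 - 4))) / (2 * p ^ 2)) ^ 2
        - 2 * ((p ^ 2 - 2 + Real.sqrt (p ^ 2 * (p ^ 2 - 4)))
            / (2 * Real.sqrt (p ^ 2 * (p ^ 2 - 4))))
          * ((p ^ 2 + Real.sqrt (p ^ 2 * (p ^ 2 - 4))) / (2 * p ^ 2))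
        + (p ^ 2 - 2 + Real.sqrt (p ^ 2 * (p ^ 2 - 4)))
            / (2 * Real.sqrt (p ^ 2 * (p ^ 2 - 4))) = 0 ∧
    ((1 / 2) * (1 + p ^ 2 / Real.sqrt (p ^ 2 * (p ^ 2 - 4)))) ^ 2
        - 2 * ((p ^ 2 - 2 + Real.sqrt (p ^ 2 * (p ^ 2 - 4)))
            / (2 * Real.sqrt (p ^ 2 * (p ^ 2 - 4))))
          * ((1 / 2) * (1 + p ^ 2 / Real.sqrt (p ^ 2 * (p ^ 2 - 4))))
        + (p ^ 2 - 2 + Real.sqrt (p ^ 2 * (p ^ 2 - 4)))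
            / (2 * Real.sqrt (p ^ 2 * (p ^ 2 - 4))) = 0 ∧
    (p ^ 2 + Real.sqrt (p ^ 2 * (p ^ 2 - 4))) / (2 * p ^ 2)
      = ((1 / 2) * (1 + p ^ 2 / Real.sqrt (p ^ 2 * (p ^ 2 - 4))))
        / (2 * ((1 / 2) * (1 + p ^ 2 / Real.sqrt (p ^ 2 * (p ^ 2 - 4)))) - 1) := by
  have hp2 : (0:ℝ) < p ^ 2 := lt_trans (by norm_num) hp
  have harg : (0:ℝ) < p ^ 2 * (p ^ 2 - 4) := mul_pos hp2 (by linarith)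
  set s := Real.sqrt (p ^ 2 * (p ^ 2 - 4)) with hs
  have hspos : 0 < s := Real.sqrt_pos.mpr harg
  have hs2 : s ^ 2 = p ^ 2 * (p ^ 2 - 4) := Real.sq_sqrt harg.le
  have hsne : s ≠ 0 := hspos.ne'
  have hp2ne : (p:ℝ) ^ 2 ≠ 0 := hp2.ne'
  refine ⟨?_, ?_, ?_⟩
  · field_simp
    have hp4 : p ^ 4 ≠ 0 := by have := pow_pos hp2 2; rw [← pow_mul] at this; exact this.ne'
    rw [div_add' _ _ _ hp4, div_eq_iff hp4]
    linear_combination s * hs2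
  · field_simp
    linear_combination hs2
  · have hden : 2 * ((1 / 2) * (1 + p ^ 2 / s)) - 1 ≠ 0 := by
      have : 2 * ((1 / 2) * (1 + p ^ 2 / s)) - 1 = p ^ 2 / s := by ring
      rw [this]
      positivity
    rw [show 2 * ((1 / 2) * (1 + p ^ 2 / s)) - 1 = p ^ 2 / s by ring]
    field_simp
    ring
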